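/- arXiv:1908.03703 — 5 statements merged into one kernel-verified Lean document; each statement's English description precedes it below -/
import Mathlib

section
/- Let V = F_q^{q+1} with q ≥ 2. Call a nonzero vector of V simplex if exactly one of its q+1 coordinates is zero. If C is a 2-dimensional subspace of V all of whose nonzero vectors are simplex (a simplex line), then every point of C (1-dimensional subspace of C) is the intersection of C with exactly one coordinate hyperplane, and distinct points correspond to distinct coordinate hyperplanes. -/
/-- A vector of `F^n` is *simplex* if exactly one of its coordinates is zero. -/
def SimplexVec {F : Type*} [Field F] [DecidableEq F] {n : ℕ} (x : Fin n → F) : Prop :=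
  (Finset.univ.filter (fun i => x i = 0)).card = 1

/-- A *simplex point* is a 1-dimensional subspace spanned by a simplex vector. -/
def SimplexPoint {F : Type*} [Field F] [DecidableEq F] {n : ℕ}
    (P : Submodule F (Fin n → F)) : Prop :=
  ∃ x : Fin n → F, SimplexVec x ∧ P = Submodule.span F {x}

/-- A *simplex line* is a 2-dimensional subspace all of whose nonzero vectors
are simplex. -/
def SimplexLine {F : Type*} [Field F] [DecidableEq F] {n : ℕ}
    (L : Submodule F (Fin n → F)) : Prop :=
  Module.finrank F ↥L = 2 ∧ ∀ x ∈ L, x ≠ 0 → SimplexVec x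

/-- Every point of a simplex line is the intersection of the line with exactly
one coordinate hyperplane. -/
theorem point_of_simplex_line_unique_coordinate_hyperplane
    (F : Type*) [Field F] [Fintype F] [DecidableEq F] (q : ℕ) (hq : 2 ≤ q)
    (hF : Fintype.card F = q)
    (C : Submodule F (Fin (q + 1) → F)) (hC : SimplexLine C)
    (p : Submodule F (Fin (q + 1) → F)) (hpC : p ≤ C) (hp : Module.finrank F ↥p = 1) :
    ∃! i : Fin (q + 1),
      p = C ⊓ LinearMap.ker (LinearMap.proj i : (Fin (q + 1) → F) →ₗ[F] F) := by
  classical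
  obtain ⟨hC2, hsim⟩ := hC
  have hpbot : p ≠ ⊥ := by
    intro h
    rw [h] at hp
    simp [finrank_bot] at hp
  obtain ⟨x, hxp, hx0⟩ := Submodule.exists_mem_ne_zero_of_ne_bot hpbot
  have hxC : x ∈ C := hpC hxp
  have hxs := hsim x hxC hx0
  obtain ⟨i, hi⟩ := Finset.card_eq_one.mp hxs
  have hxi : x i = 0 := by
    have : i ∈ Finset.univ.filter (fun j => x j = 0) := hi ▸ Finset.mem_singleton_self i
    simpa using this
  have hxj : ∀ j, j ≠ i → x j ≠ 0 := by
    intro j hj hxj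
    have : j ∈ Finset.univ.filter (fun k => x k = 0) := by simp [hxj]
    rw [hi, Finset.mem_singleton] at this
    exact hj this
  have hpx : p = Submodule.span F {x} := by
    refine (Submodule.eq_of_le_of_finrank_le
      ((Submodule.span_singleton_le_iff_mem x p).mpr hxp) ?_).symm
    rw [hp, finrank_span_singleton hx0]
  refine ⟨i, ?_, ?_⟩
  · apply le_antisymm
    · rw [hpx, Submodule.span_singleton_le_iff_mem]
      refine Submodule.mem_inf.mpr ⟨hxC, ?_⟩
      simpa [LinearMap.mem_ker] using hxi
    · rintro z hz
      obtain ⟨hzC, hzk⟩ := Submodule.mem_inf.mp hz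
      have hzi : z i = 0 := by simpa [LinearMap.mem_ker] using hzk
      obtain ⟨j, hj⟩ : ∃ j : Fin (q+1), j ≠ i := by
        rcases eq_or_ne i ⟨0, by omega⟩ with h | h
        · exact ⟨⟨1, by omega⟩, by simp [h, Fin.ext_iff]⟩
        · exact ⟨⟨0, by omega⟩, fun e => h e.symm⟩
      set c := z j * (x j)⁻¹ with hc
      have hw : z - c • x = 0 := by
        by_contra hwne
        have hwC : z - c • x ∈ C := Submodule.sub_mem C hzC (Submodule.smul_mem C c hxC)
        have hws := hsim _ hwC hwne
        have hwi : (z - c • x) i = 0 := by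
          simp [Pi.sub_apply, Pi.smul_apply, smul_eq_mul, hzi, hxi]
        have hwj : (z - c • x) j = 0 := by
          simp only [Pi.sub_apply, Pi.smul_apply, smul_eq_mul, hc]
          rw [mul_assoc, inv_mul_cancel₀ (hxj j hj), mul_one, sub_self]
        have hsub : ({i, j} : Finset (Fin (q+1))) ⊆
            Finset.univ.filter (fun k => (z - c • x) k = 0) := by
          intro k hk
          rcases Finset.mem_insert.mp hk with rfl | hk
          · simpa using hwi
          · rw [Finset.mem_singleton] at hk
            subst hk
            simpa using hwj
        have hle := Finset.card_le_card hsub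
        rw [Finset.card_pair (Ne.symm hj), hws] at hle
        omega
      have hz' : z = c • x := by rwa [sub_eq_zero] at hw
      rw [hpx, hz']
      exact Submodule.smul_mem _ _ (Submodule.mem_span_singleton_self x)
  · intro i' h'
    have hxk : x ∈ LinearMap.ker (LinearMap.proj i' : (Fin (q + 1) → F) →ₗ[F] F) :=
      (Submodule.mem_inf.mp (h' ▸ hxp)).2
    have hxi' : x i' = 0 := by simpa [LinearMap.mem_ker] using hxk
    by_contra hne
    exact hxj i' hne hxi'
end

section
/- Let V = F_q^{q+1} with q ≥ 2, and let C be a 2-dimensional subspace of V with generator matrix M (a 2 × (q+1) matrix whose rows form a basis of C). Then every nonzero vector of C has exactly one zero coordinate if and only if the q+1 columns of M are pairwise non-proportional. -/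
section aux
variable {F : Type*} [Field F] [DecidableEq F]

/-- Normalization of a nonzero vector of `F²`: the corresponding point of `ℙ¹(F)`,
encoded as `Option F`. -/
def nrm (v : Fin 2 → F) : Option F := if v 1 = 0 then none else some (v 0 / v 1)

lemma vec2_ne_zero {v : Fin 2 → F} (h : v ≠ 0) : v 0 ≠ 0 ∨ v 1 ≠ 0 := by
  by_contra hc
  push_neg at hc
  exact h (funext fun i => by fin_cases i <;> simp [hc.1, hc.2])

lemma nrm_eq_iff {u v : Fin 2 → F} (hu : u ≠ 0) (hv : v ≠ 0) :
    nrm u = nrm v ↔ ∃ c : F, v = c • u := by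
  constructor
  · intro h
    by_cases h1 : u 1 = 0
    · have h2 : v 1 = 0 := by
        by_contra h2
        simp [nrm, h1, h2] at h
      have hu0 : u 0 ≠ 0 := (vec2_ne_zero hu).resolve_right (by simp [h1])
      refine ⟨v 0 / u 0, funext fun i => ?_⟩
      fin_cases i
      · show v 0 = (v 0 / u 0) * u 0
        field_simp
      · show v 1 = (v 0 / u 0) * u 1
        simp [h1, h2]
    · have h2 : v 1 ≠ 0 := by
        by_contra h2
        simp [nrm, h1, h2] at h
      have hd : u 0 / u 1 = v 0 / v 1 := by
        simpa [nrm, h1, h2] using h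
      have key : u 0 * v 1 = v 0 * u 1 := (div_eq_div_iff h1 h2).mp hd
      refine ⟨v 1 / u 1, funext fun i => ?_⟩
      fin_cases i
      · show v 0 = (v 1 / u 1) * u 0
        rw [div_mul_eq_mul_div, eq_div_iff h1]
        linear_combination -key
      · show v 1 = (v 1 / u 1) * u 1
        field_simp
  · rintro ⟨c, rfl⟩
    have hc : c ≠ 0 := by
      rintro rfl
      simp at hv
    by_cases h1 : u 1 = 0
    · simp [nrm, h1, hc]
    · have hcu : c * u 1 ≠ 0 := mul_ne_zero hc h1
      have e0 : (c • u) 0 = c * u 0 := rfl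
      have e1 : (c • u) 1 = c * u 1 := rfl
      simp only [nrm, e0, e1, if_neg h1, if_neg hcu]
      rw [mul_div_mul_left _ _ hc]

/-- Two vectors in the kernel of a nonzero linear functional on `F²` are
proportional. -/
lemma ker_prop {a b : F} (hab : a ≠ 0 ∨ b ≠ 0) {u v : Fin 2 → F} (hu : u ≠ 0)
    (h1 : a * u 0 + b * u 1 = 0) (h2 : a * v 0 + b * v 1 = 0) :
    ∃ c : F, v = c • u := by
  rcases hab with ha | hb
  · have hu1 : u 1 ≠ 0 := by
      intro h
      rcases vec2_ne_zero hu with h0 | h0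
      · rw [h, mul_zero, add_zero] at h1
        exact h0 ((mul_eq_zero.mp h1).resolve_left ha)
      · exact h0 h
    refine ⟨v 1 / u 1, funext fun i => ?_⟩
    fin_cases i
    · show v 0 = (v 1 / u 1) * u 0
      rw [div_mul_eq_mul_div, eq_div_iff hu1]
      have : a * (v 0 * u 1) = a * (v 1 * u 0) := by
        linear_combination u 1 * h2 - v 1 * h1
      exact mul_left_cancel₀ ha this
    · show v 1 = (v 1 / u 1) * u 1
      field_simp
  · have hu0 : u 0 ≠ 0 := by
      intro h
      rcases vec2_ne_zero hu with h0 | h0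
      · exact h0 h
      · rw [h, mul_zero, zero_add] at h1
        exact h0 ((mul_eq_zero.mp h1).resolve_left hb)
    refine ⟨v 0 / u 0, funext fun i => ?_⟩
    fin_cases i
    · show v 0 = (v 0 / u 0) * u 0
      field_simp
    · show v 1 = (v 0 / u 0) * u 1
      rw [div_mul_eq_mul_div, eq_div_iff hu0]
      have : b * (v 1 * u 0) = b * (v 0 * u 1) := by
        linear_combination u 0 * h2 - v 0 * h1
      exact mul_left_cancel₀ hb this

end aux

/-- For a 2-dimensional subspace `C` of `F^(q+1)` with generator matrix `M`,
every nonzero vector of `C` has exactly one zero coordinate iff the columns of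
`M` are pairwise non-proportional. -/
theorem simplex_line_iff_columns_non_proportional
    (F : Type*) [Field F] [Fintype F] [DecidableEq F] (q : ℕ) (hq : 2 ≤ q)
    (hF : Fintype.card F = q)
    (M : Matrix (Fin 2) (Fin (q + 1)) F)
    (C : Submodule F (Fin (q + 1) → F))
    (hindep : LinearIndependent F (fun i : Fin 2 => M i))
    (hspan : C = Submodule.span F (Set.range (fun i : Fin 2 => M i))) :
    (∀ x ∈ C, x ≠ 0 → SimplexVec x) ↔
      ∀ j j' : Fin (q + 1), j ≠ j' →
        ¬∃ c : F, (fun i : Fin 2 => M i j') = c • (fun i : Fin 2 => M i j) := by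
  have hrange : Set.range (fun i : Fin 2 => M i) = {M 0, M 1} := by
    ext y
    simp [Fin.exists_fin_two, eq_comm]
  have hmem : ∀ y : Fin (q + 1) → F, y ∈ C ↔ ∃ a b : F, a • M 0 + b • M 1 = y := by
    intro y
    rw [hspan, hrange]
    exact Submodule.mem_span_pair
  have hzero : ∀ a b : F, a • M 0 + b • M 1 = 0 → a = 0 ∧ b = 0 := by
    intro a b h
    have := Fintype.linearIndependent_iff.mp hindep ![a, b] (by
      simpa [Fin.sum_univ_two] using h)
    exact ⟨this 0, this 1⟩
  constructor
  · -- simplex ⇒ non-proportional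
    intro hs j j' hne
    rintro ⟨c, hc⟩
    obtain ⟨a, b, hab, hk⟩ : ∃ a b : F, (a ≠ 0 ∨ b ≠ 0) ∧ a * M 0 j + b * M 1 j = 0 := by
      by_cases h0 : M 0 j = 0 ∧ M 1 j = 0
      · exact ⟨1, 0, Or.inl one_ne_zero, by simp [h0.1]⟩
      · refine ⟨-(M 1 j), M 0 j, ?_, by ring⟩
        rcases not_and_or.mp h0 with h | h
        · exact Or.inr h
        · exact Or.inl (neg_ne_zero.mpr h)
    set x : Fin (q + 1) → F := a • M 0 + b • M 1 with hx
    have hxC : x ∈ C := (hmem x).mpr ⟨a, b, rfl⟩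
    have hxne : x ≠ 0 := by
      intro h
      obtain ⟨ha, hb⟩ := hzero a b h
      rcases hab with h' | h'
      · exact h' ha
      · exact h' hb
    have hsx := hs x hxC hxne
    have hj : x j = 0 := hk
    have hj' : x j' = 0 := by
      have h0 : M 0 j' = c * M 0 j := congrFun hc 0
      have h1 : M 1 j' = c * M 1 j := congrFun hc 1
      show a * M 0 j' + b * M 1 j' = 0
      rw [h0, h1]
      linear_combination c * hk
    have hsub : ({j, j'} : Finset (Fin (q + 1))) ⊆
        Finset.univ.filter (fun i => x i = 0) := by
      intro i hi
      simp only [Finset.mem_insert, Finset.mem_singleton] at hi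
      rcases hi with rfl | rfl
      · simp [Finset.mem_filter, hj]
      · simp [Finset.mem_filter, hj']
    have h2 : 2 ≤ (Finset.univ.filter (fun i => x i = 0)).card := by
      have : ({j, j'} : Finset (Fin (q + 1))).card = 2 := by
        rw [Finset.card_insert_of_notMem (by simpa using hne), Finset.card_singleton]
      rw [← this]
      exact Finset.card_le_card hsub
    rw [SimplexVec] at hsx
    omega
  · -- non-proportional ⇒ simplex
    intro H x hxC hx0
    have hnt : Nontrivial (Fin (q + 1)) := Fin.nontrivial_iff_two_le.mpr (by omega)
    have hcol : ∀ j : Fin (q + 1), (fun i : Fin 2 => M i j) ≠ 0 := by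
      intro j h0
      obtain ⟨j', hj'⟩ := exists_ne j
      exact H j' j hj' ⟨0, by rw [h0]; simp⟩
    set N : Fin (q + 1) → Option F := fun j => nrm (fun i : Fin 2 => M i j) with hN
    have hNinj : Function.Injective N := by
      intro j j' h
      by_contra hne
      exact H j j' hne ((nrm_eq_iff (hcol j) (hcol j')).mp h)
    have hNsurj : Function.Surjective N := by
      have hcard : Fintype.card (Fin (q + 1)) = Fintype.card (Option F) := by
        simp [hF]
      exact ((Fintype.bijective_iff_injective_and_card N).mpr ⟨hNinj, hcard⟩).2
    obtain ⟨a, b, hx⟩ := (hmem x).mp hxC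
    have hab : a ≠ 0 ∨ b ≠ 0 := by
      by_contra h
      push_neg at h
      exact hx0 (by rw [← hx, h.1, h.2]; simp)
    set w : Fin 2 → F := ![-b, a] with hw
    have hw0 : w 0 = -b := rfl
    have hw1 : w 1 = a := rfl
    have hwne : w ≠ 0 := by
      intro h
      rcases hab with h' | h'
      · exact h' (by simpa [hw1] using congrFun h 1)
      · exact h' (by simpa [hw0, neg_eq_zero] using congrFun h 0)
    obtain ⟨j, hj⟩ := hNsurj (nrm w)
    obtain ⟨c, hcw⟩ := (nrm_eq_iff (hcol j) hwne).mp hj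
    have hcne : c ≠ 0 := by
      rintro rfl
      rw [zero_smul] at hcw
      exact hwne hcw
    have hkj : a * M 0 j + b * M 1 j = 0 := by
      have e0 : w 0 = c * M 0 j := congrFun hcw 0
      have e1 : w 1 = c * M 1 j := congrFun hcw 1
      have hwk : a * w 0 + b * w 1 = 0 := by rw [hw0, hw1]; ring
      rw [e0, e1] at hwk
      have hcc : c * (a * M 0 j + b * M 1 j) = 0 := by linear_combination hwk
      exact (mul_eq_zero.mp hcc).resolve_left hcne
    have hxj : x j = 0 := by
      rw [← hx]
      exact hkj
    rw [SimplexVec, Finset.card_eq_one]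
    refine ⟨j, ?_⟩
    ext i
    simp only [Finset.mem_filter, Finset.mem_univ, true_and, Finset.mem_singleton]
    constructor
    · intro hxi
      by_contra hne
      have hki : a * M 0 i + b * M 1 i = 0 := by
        rw [← hx] at hxi
        exact hxi
      obtain ⟨d, hd⟩ := ker_prop (v := fun i' : Fin 2 => M i' i) hab (hcol j) hkj hki
      exact H j i (Ne.symm hne) ⟨d, hd⟩
    · rintro rfl
      exact hxj
end

section
/- Let q ≥ 2 and V = F_q^{q+1}. The simplex point P spanned by (0,1,1,...,1) is adjacent to a simplex point Q (i.e., the 2-dimensional subspace P + Q is a simplex line) if and only if Q is spanned by a vector (1, a_1, ..., a_q) where a_1, ..., a_q are pairwise distinct elements of F_q. Consequently there are exactly q! simplex points adjacent to P. -/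
section Aux

variable {F : Type*} [Field F] [DecidableEq F]

lemma aux_not_simplexVec_of_two_zeros {n : ℕ} {v : Fin n → F} {i j : Fin n}
    (hij : i ≠ j) (hi : v i = 0) (hj : v j = 0) : ¬ SimplexVec v := by
  intro h
  have hsub : ({i, j} : Finset (Fin n)) ⊆ Finset.univ.filter (fun k => v k = 0) := by
    intro k hk
    simp only [Finset.mem_insert, Finset.mem_singleton] at hk
    rcases hk with rfl | rfl <;> simp [hi, hj]
  have := Finset.card_le_card hsub
  rw [Finset.card_pair hij, h] at this
  omega

lemma aux_simplexVec_cons {n : ℕ} {c : F} {f : Fin n → F}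
    (hc : c ≠ 0) (hf : ∃! j, f j = 0) : SimplexVec (Fin.cons c f) := by
  obtain ⟨j₀, hj₀, huniq⟩ := hf
  have hfil : Finset.univ.filter (fun i : Fin (n+1) => (Fin.cons c f : Fin (n+1) → F) i = 0) = ({Fin.succ j₀} : Finset (Fin (n+1))) := by
    ext i
    induction i using Fin.cases with
    | zero => simp [hc, (Fin.succ_ne_zero j₀).symm]
    | succ j =>
      simp only [Finset.mem_filter, Finset.mem_univ, true_and, Fin.cons_succ,
        Finset.mem_singleton, Fin.succ_inj]
      exact ⟨fun h => huniq j h, fun h => h ▸ hj₀⟩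
  rw [SimplexVec, hfil, Finset.card_singleton]

lemma aux_existsUnique [Fintype F] {q : ℕ} (hF : Fintype.card F = q)
    {g : Fin q → F} (hg : Function.Injective g) (b : F) : ∃! j, g j = b := by
  have hbij : Function.Bijective g :=
    (Fintype.bijective_iff_injective_and_card g).2 ⟨hg, by simp [hF]⟩
  exact hbij.existsUnique b

end Aux

set_option maxHeartbeats 1000000 in
/-- The simplex point spanned by `(0,1,…,1)` is adjacent to a simplex point `Q`
iff `Q` is spanned by `(1, a_1, …, a_q)` with the `a_i` pairwise distinct;
consequently exactly `q!` simplex points are adjacent to it. -/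
theorem adjacency_with_standard_simplex_point
    (F : Type*) [Field F] [Fintype F] [DecidableEq F] (q : ℕ) (hq : 2 ≤ q)
    (hF : Fintype.card F = q) :
    (∀ Q : Submodule F (Fin (q + 1) → F), SimplexPoint Q →
      ((Q ≠ Submodule.span F {fun i : Fin (q + 1) => if i = 0 then (0 : F) else 1} ∧
          SimplexLine
            (Submodule.span F {fun i : Fin (q + 1) => if i = 0 then (0 : F) else 1} ⊔ Q)) ↔
        ∃ a : Fin q → F, Function.Injective a ∧
          Q = Submodule.span F {Fin.cons (1 : F) a})) ∧
    Nat.card {Q : Submodule F (Fin (q + 1) → F) //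
        SimplexPoint Q ∧
        Q ≠ Submodule.span F {fun i : Fin (q + 1) => if i = 0 then (0 : F) else 1} ∧
        SimplexLine
          (Submodule.span F {fun i : Fin (q + 1) => if i = 0 then (0 : F) else 1} ⊔ Q)} =
      Nat.factorial q := by
  haveI : NeZero q := ⟨by omega⟩
  set e : Fin (q + 1) → F := fun i : Fin (q + 1) => if i = 0 then (0 : F) else 1 with he
  have he0 : e 0 = 0 := by simp [he]
  have hesucc : ∀ j : Fin q, e (Fin.succ j) = 1 := fun j => by
    simp [he, Fin.succ_ne_zero]
  -- the main equivalence
  have key : ∀ Q : Submodule F (Fin (q + 1) → F), SimplexPoint Q →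
      ((Q ≠ Submodule.span F {e} ∧ SimplexLine (Submodule.span F {e} ⊔ Q)) ↔
        ∃ a : Fin q → F, Function.Injective a ∧
          Q = Submodule.span F {Fin.cons (1 : F) a}) := by
    intro Q hQ
    obtain ⟨y, hy, rfl⟩ := hQ
    constructor
    · rintro ⟨hne, hline⟩
      set L := Submodule.span F {e} ⊔ Submodule.span F {y} with hL
      have heL : e ∈ L := Submodule.mem_sup_left (Submodule.mem_span_singleton_self e)
      have hyL : y ∈ L := Submodule.mem_sup_right (Submodule.mem_span_singleton_self y)
      -- Step 1 : y 0 ≠ 0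
      have hy0 : y 0 ≠ 0 := by
        intro h0
        set j₁ : Fin (q + 1) := Fin.succ (0 : Fin q) with hj₁
        have hne01 : (0 : Fin (q + 1)) ≠ j₁ := (Fin.succ_ne_zero _).symm
        have hyj₁ : y j₁ ≠ 0 := by
          intro h1
          exact aux_not_simplexVec_of_two_zeros hne01 h0 h1 hy
        set v : Fin (q + 1) → F := y - y j₁ • e with hv
        have hvL : v ∈ L := Submodule.sub_mem _ hyL (Submodule.smul_mem _ _ heL)
        have hv0 : v 0 = 0 := by simp [hv, h0, he0]
        have hvj₁ : v j₁ = 0 := by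
          simp only [hv, Pi.sub_apply, Pi.smul_apply, smul_eq_mul, hj₁, hesucc, mul_one, sub_self]
        have hvne : v ≠ 0 := by
          intro hveq
          have hyeq : y = y j₁ • e := sub_eq_zero.mp (by rwa [hv] at hveq)
          exact hne (by rw [hyeq, Submodule.span_singleton_smul_eq (isUnit_iff_ne_zero.2 hyj₁)])
        exact aux_not_simplexVec_of_two_zeros hne01 hv0 hvj₁ (hline.2 v hvL hvne)
      -- Step 2 : normalize
      set a : Fin q → F := fun j => (y 0)⁻¹ * y (Fin.succ j) with ha
      have hxy : (y 0)⁻¹ • y = Fin.cons (1 : F) a := by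
        funext i
        induction i using Fin.cases with
        | zero => simp [inv_mul_cancel₀ hy0]
        | succ j => simp [ha]
      have hspan : Submodule.span F {y} = Submodule.span F {Fin.cons (1 : F) a} := by
        rw [← hxy, Submodule.span_singleton_smul_eq (isUnit_iff_ne_zero.2 (inv_ne_zero hy0))]
      have hxL : Fin.cons (1 : F) a ∈ L := by
        rw [← hxy]; exact Submodule.smul_mem _ _ hyL
      refine ⟨a, ?_, hspan⟩
      -- Step 3 : injectivity
      intro i j hija
      by_contra hij
      set v : Fin (q + 1) → F := Fin.cons (1 : F) a - a i • e with hv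
      have hvL : v ∈ L := Submodule.sub_mem _ hxL (Submodule.smul_mem _ _ heL)
      have hvne : v ≠ 0 := by
        intro hveq
        have := congrFun hveq 0
        simp [hv, he0] at this
      have hvi : v (Fin.succ i) = 0 := by simp [hv, hesucc]
      have hvj : v (Fin.succ j) = 0 := by simp [hv, hesucc, ← hija]
      exact aux_not_simplexVec_of_two_zeros
        (fun h => hij (Fin.succ_injective _ h)) hvi hvj (hline.2 v hvL hvne)
    · rintro ⟨a, ha, hspan⟩
      set x : Fin (q + 1) → F := Fin.cons (1 : F) a with hx
      have hx0 : x 0 = 1 := by simp [hx]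
      constructor
      · -- Q ≠ span {e}
        rw [hspan]
        intro hcon
        have : x ∈ Submodule.span F {e} := by
          rw [← hcon]; exact Submodule.mem_span_singleton_self x
        obtain ⟨c, hc⟩ := Submodule.mem_span_singleton.1 this
        have := congrFun hc 0
        simp [he0, hx0] at this
      · -- simplex line
        rw [hspan]
        have hspan2 : Submodule.span F {e} ⊔ Submodule.span F {x} =
            Submodule.span F {e, x} := by
          rw [← Submodule.span_union, Set.singleton_union]
        have hxne : x ≠ e := by
          intro h
          have := congrFun h 0
          rw [hx0, he0] at this
          exact one_ne_zero this
        have hindep : LinearIndependent F ((↑) : ({e, x} : Set (Fin (q + 1) → F)) → (Fin (q + 1) → F)) := by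
          refine linearIndepOn_id_pair ?_ ?_
          · intro h
            have := congrFun h (Fin.succ 0)
            rw [hesucc] at this
            exact one_ne_zero this
          · intro c hc
            have := congrFun hc 0
            rw [Pi.smul_apply, he0, hx0, smul_zero] at this
            exact one_ne_zero this.symm
        constructor
        · rw [hspan2, show Module.finrank F ↥(Submodule.span F {e, x}) =
              ({e, x} : Set (Fin (q + 1) → F)).toFinset.card from
              finrank_span_set_eq_card hindep]
          rw [Set.toFinset_insert, Set.toFinset_singleton]
          rw [Finset.card_pair (Ne.symm hxne)]
        · intro v hvL hvne
          rw [hspan2] at hvL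
          obtain ⟨c, d, rfl⟩ := Submodule.mem_span_pair.1 hvL
          by_cases hd : d = 0
          · subst hd
            have hc : c ≠ 0 := by
              intro hc0
              exact hvne (by simp [hc0])
            have hfil : Finset.univ.filter (fun i => (c • e + (0:F) • x) i = 0) =
                {(0 : Fin (q + 1))} := by
              ext i
              induction i using Fin.cases with
              | zero => simp [he0]
              | succ j => simp [hesucc, hc, Fin.succ_ne_zero]
            rw [SimplexVec, hfil, Finset.card_singleton]
          · have hform : c • e + d • x = Fin.cons d (fun j => c + d * a j) := by
              funext i
              induction i using Fin.cases with
              | zero => simp [he0, hx0]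
              | succ j => simp [hesucc, hx, mul_comm]
            rw [hform]
            apply aux_simplexVec_cons hd
            have hginj : Function.Injective (fun j => c + d * a j) := by
              intro i j hij
              simp only [add_right_inj] at hij
              exact ha (mul_left_cancel₀ hd hij)
            exact aux_existsUnique hF hginj 0
  refine ⟨key, ?_⟩
  -- counting
  set Adj := {Q : Submodule F (Fin (q + 1) → F) //
      SimplexPoint Q ∧ Q ≠ Submodule.span F {e} ∧
      SimplexLine (Submodule.span F {e} ⊔ Q)} with hAdj
  have hSVx : ∀ a : Fin q ↪ F, SimplexVec (Fin.cons (1 : F) a) := by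
    intro a
    exact aux_simplexVec_cons one_ne_zero (aux_existsUnique hF a.injective 0)
  have hSP : ∀ a : Fin q ↪ F, SimplexPoint (Submodule.span F {Fin.cons (1 : F) a}) :=
    fun a => ⟨Fin.cons 1 a, hSVx a, rfl⟩
  have hprop : ∀ a : Fin q ↪ F,
      SimplexPoint (Submodule.span F {Fin.cons (1 : F) a}) ∧
      Submodule.span F {Fin.cons (1 : F) a} ≠ Submodule.span F {e} ∧
      SimplexLine (Submodule.span F {e} ⊔ Submodule.span F {Fin.cons (1 : F) a}) :=
    fun a => ⟨hSP a, (key _ (hSP a)).2 ⟨a, a.injective, rfl⟩⟩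
  have hbij : Function.Bijective (fun a : Fin q ↪ F => (⟨_, hprop a⟩ : Adj)) := by
    constructor
    · intro a b hab
      rw [Subtype.mk_eq_mk] at hab
      have hmem : (Fin.cons (1 : F) (b : Fin q → F) : Fin (q+1) → F) ∈
          Submodule.span F {(Fin.cons (1 : F) (a : Fin q → F) : Fin (q+1) → F)} := by
        rw [hab]; exact Submodule.mem_span_singleton_self _
      obtain ⟨c, hc⟩ := Submodule.mem_span_singleton.1 hmem
      have hc1 : c = 1 := by
        have := congrFun hc 0
        simpa using this
      subst hc1
      ext j
      have := congrFun hc (Fin.succ j)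
      simpa using this
    · rintro ⟨Q, hQ, hadj⟩
      obtain ⟨a, ha, rfl⟩ := (key Q hQ).1 hadj
      exact ⟨⟨a, ha⟩, Subtype.ext rfl⟩
  rw [← Nat.card_eq_of_bijective _ hbij, Nat.card_eq_fintype_card,
    Fintype.card_embedding_eq, hF, Fintype.card_fin, Nat.descFactorial_self]
end

section
/- Let q ≥ 2 and V = F_q^{q+1}. Every simplex point of V is contained in exactly (q-1)! simplex lines. -/
section Aux

set_option linter.unusedSectionVars false

variable {F : Type*} [Field F] [Fintype F] [DecidableEq F] {q : ℕ}

lemma span_pair_finrank (x y : Fin (q+1) → F) (i₀ : Fin (q+1))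
    (hx : ∀ j, x j = 0 ↔ j = i₀) (hy0 : y i₀ = 1) (j₁ : Fin (q+1)) (hj₁ : j₁ ≠ i₀) :
    Module.finrank F ↥(Submodule.span F ({x, y} : Set (Fin (q+1) → F))) = 2 := by
  have hli : LinearIndependent F ![x, y] := by
    rw [LinearIndependent.pair_iff]
    intro s t hst
    have h1 := congr_fun hst i₀
    simp only [Pi.add_apply, Pi.smul_apply, smul_eq_mul, Pi.zero_apply, hy0,
      (hx i₀).mpr rfl, mul_zero, mul_one, zero_add] at h1
    subst h1
    have h2 := congr_fun hst j₁
    simp only [Pi.add_apply, Pi.smul_apply, smul_eq_mul, Pi.zero_apply, zero_mul,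
      add_zero] at h2
    exact ⟨(mul_eq_zero.mp h2).resolve_right (fun h => hj₁ ((hx j₁).mp h)), rfl⟩
  have := finrank_span_eq_card hli
  rwa [Matrix.range_cons_cons_empty, Fintype.card_fin] at this

lemma core_simplexLine (hF : Fintype.card F = q)
    (x y : Fin (q+1) → F) (i₀ : Fin (q+1))
    (hx : ∀ j, x j = 0 ↔ j = i₀) (hy0 : y i₀ = 1) (j₁ : Fin (q+1)) (hj₁ : j₁ ≠ i₀)
    (hinj : Function.Injective (fun j : {j : Fin (q+1) // j ≠ i₀} => y j.1 * (x j.1)⁻¹)) :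
    SimplexLine (Submodule.span F ({x, y} : Set (Fin (q+1) → F))) := by
  constructor
  · exact span_pair_finrank x y i₀ hx hy0 j₁ hj₁
  · intro v hv hvne
    obtain ⟨a, b, hab⟩ := Submodule.mem_span_pair.mp hv
    have hvj : ∀ j, v j = a * x j + b * y j := by
      intro j; rw [← hab]; simp
    by_cases hb : b = 0
    · have ha : a ≠ 0 := by
        rintro rfl
        apply hvne
        rw [← hab, hb]; simp
      unfold SimplexVec
      rw [Finset.card_eq_one]
      refine ⟨i₀, ?_⟩
      ext j
      simp only [Finset.mem_filter, Finset.mem_univ, true_and, Finset.mem_singleton,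
        hvj j, hb, zero_mul, add_zero, mul_eq_zero]
      constructor
      · rintro (h | h)
        · exact absurd h ha
        · exact (hx j).mp h
      · intro h; exact Or.inr ((hx j).mpr h)
    · -- b ≠ 0
      have hcard : Fintype.card {j : Fin (q+1) // j ≠ i₀} = Fintype.card F := by
        rw [hF, Fintype.card_subtype]
        rw [show (Finset.univ.filter (fun j : Fin (q+1) => j ≠ i₀)) = Finset.univ.erase i₀ by
          ext j; simp [Finset.mem_erase]]
        rw [Finset.card_erase_of_mem (Finset.mem_univ _), Finset.card_univ, Fintype.card_fin]
        rfl
      have hbij : Function.Bijective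
          (fun j : {j : Fin (q+1) // j ≠ i₀} => y j.1 * (x j.1)⁻¹) :=
        (Fintype.bijective_iff_injective_and_card _).mpr ⟨hinj, hcard⟩
      obtain ⟨js, hjs⟩ := hbij.2 (-(a * b⁻¹))
      unfold SimplexVec
      rw [Finset.card_eq_one]
      refine ⟨js.1, ?_⟩
      have hvi₀ : v i₀ ≠ 0 := by
        rw [hvj i₀, (hx i₀).mpr rfl, hy0]; simpa using hb
      have key : ∀ (j : Fin (q+1)) (hj : j ≠ i₀),
          (v j = 0 ↔ y j * (x j)⁻¹ = -(a * b⁻¹)) := by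
        intro j hj
        have hxj : x j ≠ 0 := fun h => hj ((hx j).mp h)
        rw [hvj j]
        constructor
        · intro h
          field_simp
          linear_combination h
        · intro h
          field_simp at h
          linear_combination h
      ext j
      simp only [Finset.mem_filter, Finset.mem_univ, true_and, Finset.mem_singleton]
      by_cases hj : j = i₀
      · subst hj
        constructor
        · intro h; exact absurd h hvi₀
        · intro h; exact absurd h.symm js.2
      · rw [key j hj]
        constructor
        · intro h
          have : (⟨j, hj⟩ : {j : Fin (q+1) // j ≠ i₀}) = js := hinj (by rw [hjs]; exact h)
          exact congrArg Subtype.val this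
        · intro h
          have : (⟨j, hj⟩ : {j : Fin (q+1) // j ≠ i₀}) = js := Subtype.ext h
          rw [← hjs, ← this]

end Aux

/-- Every simplex point of `F_q^(q+1)` lies on exactly `(q-1)!` simplex lines. -/
theorem simplex_point_on_factorial_lines
    (F : Type*) [Field F] [Fintype F] [DecidableEq F] (q : ℕ) (hq : 2 ≤ q)
    (hF : Fintype.card F = q)
    (P : Submodule F (Fin (q + 1) → F)) (hP : SimplexPoint P) :
    Nat.card {L : Submodule F (Fin (q + 1) → F) // SimplexLine L ∧ P ≤ L} =
      Nat.factorial (q - 1) := by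
  obtain ⟨x, hxs, rfl⟩ := hP
  obtain ⟨i₀, hi₀⟩ := Finset.card_eq_one.mp hxs
  have hx : ∀ j, x j = 0 ↔ j = i₀ := by
    intro j
    constructor
    · intro h
      have : j ∈ Finset.univ.filter (fun i => x i = 0) := by simp [h]
      rwa [hi₀, Finset.mem_singleton] at this
    · intro h
      rw [h]
      have : i₀ ∈ ({i₀} : Finset (Fin (q+1))) := Finset.mem_singleton_self _
      rw [← hi₀, Finset.mem_filter] at this
      exact this.2
  obtain ⟨j₀, hj₀⟩ : ∃ j₀ : Fin (q+1), j₀ ≠ i₀ := by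
    have : 1 < Fintype.card (Fin (q+1)) := by simp; omega
    exact Fintype.exists_ne_of_one_lt_card this i₀
  have hxj₀ : x j₀ ≠ 0 := fun h => hj₀ ((hx j₀).mp h)
  have hxne : x ≠ 0 := fun h => hxj₀ (by rw [h]; rfl)
  -- parameter space
  set T := ({j : Fin (q+1) // j ≠ i₀ ∧ j ≠ j₀} ↪ {a : F // a ≠ 0}) with hT
  -- the vector associated to a parameter
  set ye : T → (Fin (q+1) → F) := fun e j =>
    if h1 : j = i₀ then 1 else if h2 : j = j₀ then 0 else x j * (e ⟨j, h1, h2⟩ : F) with hye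
  have hye_i₀ : ∀ e, ye e i₀ = 1 := fun e => by simp [hye]
  have hye_j₀ : ∀ e, ye e j₀ = 0 := fun e => by simp [hye, hj₀]
  have hye_other : ∀ e j (h1 : j ≠ i₀) (h2 : j ≠ j₀), ye e j = x j * (e ⟨j, h1, h2⟩ : F) :=
    fun e j h1 h2 => by simp [hye, h1, h2]
  have hinj_ye : ∀ e : T, Function.Injective
      (fun j : {j : Fin (q+1) // j ≠ i₀} => ye e j.1 * (x j.1)⁻¹) := by
    intro e
    rintro ⟨j, hj⟩ ⟨j', hj'⟩ h
    simp only at h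
    have hval : ∀ (k : Fin (q+1)) (hk : k ≠ i₀) (hk2 : k ≠ j₀),
        ye e k * (x k)⁻¹ = (e ⟨k, hk, hk2⟩ : F) := by
      intro k hk hk2
      rw [hye_other e k hk hk2, mul_comm (x k), mul_assoc,
        mul_inv_cancel₀ (fun h0 => hk ((hx k).mp h0)), mul_one]
    by_cases h2 : j = j₀ <;> by_cases h2' : j' = j₀
    · simp [h2, h2']
    · exfalso
      rw [h2, hye_j₀, zero_mul, hval j' hj' h2'] at h
      exact (e ⟨j', hj', h2'⟩).2 h.symm
    · exfalso
      rw [h2', hye_j₀, zero_mul, hval j hj h2] at h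
      exact (e ⟨j, hj, h2⟩).2 h
    · rw [hval j hj h2, hval j' hj' h2'] at h
      have := e.injective (Subtype.ext h)
      simpa using congrArg Subtype.val this
  -- the map from parameters to lines
  have hΦmem : ∀ e : T, SimplexLine (Submodule.span F ({x, ye e} : Set (Fin (q+1) → F))) ∧
      Submodule.span F {x} ≤ Submodule.span F ({x, ye e} : Set (Fin (q+1) → F)) := by
    intro e
    refine ⟨core_simplexLine hF x (ye e) i₀ hx (hye_i₀ e) j₀ hj₀ (hinj_ye e), ?_⟩
    exact Submodule.span_mono (Set.singleton_subset_iff.mpr (Set.mem_insert _ _))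
  set Φ : T → {L : Submodule F (Fin (q + 1) → F) // SimplexLine L ∧ Submodule.span F {x} ≤ L} :=
    fun e => ⟨Submodule.span F ({x, ye e} : Set (Fin (q+1) → F)), hΦmem e⟩ with hΦ
  have hΦbij : Function.Bijective Φ := by
    constructor
    · -- injective
      intro e e' h
      have hsp : Submodule.span F ({x, ye e} : Set (Fin (q+1) → F)) =
          Submodule.span F ({x, ye e'} : Set (Fin (q+1) → F)) := congrArg Subtype.val h
      have hmem : ye e' ∈ Submodule.span F ({x, ye e} : Set (Fin (q+1) → F)) := by
        rw [hsp]
        exact Submodule.subset_span (Set.mem_insert_of_mem _ rfl)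
      obtain ⟨a, b, hab⟩ := Submodule.mem_span_pair.mp hmem
      have h1 : b = 1 := by
        have := congr_fun hab i₀
        simpa [hye_i₀, (hx i₀).mpr rfl] using this
      have h2 : a = 0 := by
        have := congr_fun hab j₀
        simp [hye_j₀, h1] at this
        rcases this with h | h
        · exact h
        · exact absurd h hxj₀
      have hyy : ye e' = ye e := by
        rw [← hab, h1, h2]; simp
      apply DFunLike.ext
      rintro ⟨j, hj1, hj2⟩
      have := congr_fun hyy j
      rw [hye_other e' j hj1 hj2, hye_other e j hj1 hj2] at this
      have hxj : x j ≠ 0 := fun h0 => hj1 ((hx j).mp h0)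
      exact Subtype.ext (mul_left_cancel₀ hxj this.symm)
    · -- surjective
      rintro ⟨L, hL, hPL⟩
      have hxL : x ∈ L := hPL (Submodule.mem_span_singleton_self x)
      have hne : Submodule.span F ({x} : Set (Fin (q+1) → F)) ≠ L := by
        intro h
        have h1 : Module.finrank F ↥(Submodule.span F ({x} : Set (Fin (q+1) → F))) = 1 :=
          finrank_span_singleton hxne
        rw [h, hL.1] at h1
        omega
      obtain ⟨w, hwL, hwP⟩ := SetLike.exists_of_lt (lt_of_le_of_ne hPL hne)
      -- no two coordinates of a nonzero vector of L vanish
      have htwozero : ∀ v ∈ L, v i₀ = 0 → v j₀ = 0 → v = 0 := by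
        intro v hv h1 h2
        by_contra hv0
        have := hL.2 v hv hv0
        unfold SimplexVec at this
        have hsub : ({i₀, j₀} : Finset (Fin (q+1))) ⊆
            Finset.univ.filter (fun i => v i = 0) := by
          intro k hk
          simp only [Finset.mem_insert, Finset.mem_singleton] at hk
          rcases hk with rfl | rfl <;> simp [h1, h2]
        have hc2 : ({i₀, j₀} : Finset (Fin (q+1))).card = 2 := by
          rw [Finset.card_insert_of_notMem (by simpa using (Ne.symm hj₀))]
          rfl
        have := Finset.card_le_card hsub
        omega
      have hwi₀ : w i₀ ≠ 0 := by
        intro h0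
        have hu : w - (w j₀ * (x j₀)⁻¹) • x ∈ L :=
          Submodule.sub_mem L hwL (Submodule.smul_mem L _ hxL)
        have hu0 : w - (w j₀ * (x j₀)⁻¹) • x = 0 := by
          apply htwozero _ hu
          · simp [h0, (hx i₀).mpr rfl]
          · simp [mul_assoc, inv_mul_cancel₀ hxj₀]
        apply hwP
        rw [Submodule.mem_span_singleton]
        exact ⟨w j₀ * (x j₀)⁻¹, by rw [eq_comm, ← sub_eq_zero]; simpa using hu0⟩
      -- normalize
      set y : Fin (q+1) → F :=
        (w i₀)⁻¹ • w - (((w i₀)⁻¹ * w j₀) * (x j₀)⁻¹) • x with hy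
      have hyL : y ∈ L :=
        Submodule.sub_mem L (Submodule.smul_mem L _ hwL) (Submodule.smul_mem L _ hxL)
      have hyi₀ : y i₀ = 1 := by
        simp [hy, (hx i₀).mpr rfl, inv_mul_cancel₀ hwi₀]
      have hyj₀ : y j₀ = 0 := by
        simp [hy, mul_assoc, inv_mul_cancel₀ hxj₀]
      have hinj_f : Function.Injective
          (fun j : {j : Fin (q+1) // j ≠ i₀} => y j.1 * (x j.1)⁻¹) := by
        rintro ⟨j, hj⟩ ⟨j', hj'⟩ h
        simp only at h
        by_contra hcne
        have hjj' : j ≠ j' := fun hh => hcne (Subtype.ext hh)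
        have hxj : x j ≠ 0 := fun h0 => hj ((hx j).mp h0)
        have hxj' : x j' ≠ 0 := fun h0 => hj' ((hx j').mp h0)
        set v : Fin (q+1) → F := y - (y j * (x j)⁻¹) • x with hv
        have hvL : v ∈ L := Submodule.sub_mem L hyL (Submodule.smul_mem L _ hxL)
        have hvne : v ≠ 0 := by
          intro h0
          have := congr_fun h0 i₀
          simp [hv, hyi₀, (hx i₀).mpr rfl] at this
        have := hL.2 v hvL hvne
        unfold SimplexVec at this
        have hvj : v j = 0 := by
          simp [hv, mul_assoc, inv_mul_cancel₀ hxj]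
        have hvj' : v j' = 0 := by
          simp only [hv, Pi.sub_apply, Pi.smul_apply, smul_eq_mul]
          rw [h, mul_assoc, inv_mul_cancel₀ hxj', mul_one, sub_self]
        have hsub : ({j, j'} : Finset (Fin (q+1))) ⊆
            Finset.univ.filter (fun i => v i = 0) := by
          intro k hk
          simp only [Finset.mem_insert, Finset.mem_singleton] at hk
          rcases hk with rfl | rfl <;> simp [hvj, hvj']
        have hc2 : ({j, j'} : Finset (Fin (q+1))).card = 2 := by
          rw [Finset.card_insert_of_notMem (by simpa using hjj')]
          rfl
        have := Finset.card_le_card hsub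
        omega
      -- build the parameter
      have hnz : ∀ (j : Fin (q+1)) (h1 : j ≠ i₀) (h2 : j ≠ j₀), y j * (x j)⁻¹ ≠ 0 := by
        intro j h1 h2 h0
        have h0' : y j₀ * (x j₀)⁻¹ = 0 := by rw [hyj₀, zero_mul]
        have := hinj_f (a₁ := ⟨j, h1⟩) (a₂ := ⟨j₀, hj₀⟩) (by simp only; rw [h0, h0'])
        exact h2 (by simpa using congrArg Subtype.val this)
      set e : T := ⟨fun j => ⟨y j.1 * (x j.1)⁻¹, hnz j.1 j.2.1 j.2.2⟩, by
        rintro ⟨j, hj1, hj2⟩ ⟨j', hj1', hj2'⟩ h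
        have h' : y j * (x j)⁻¹ = y j' * (x j')⁻¹ := congrArg Subtype.val h
        have := hinj_f (a₁ := ⟨j, hj1⟩) (a₂ := ⟨j', hj1'⟩) h'
        exact Subtype.ext (by simpa using congrArg Subtype.val this)⟩ with he
      have hyee : ye e = y := by
        funext j
        by_cases h1 : j = i₀
        · rw [h1, hye_i₀, hyi₀]
        · by_cases h2 : j = j₀
          · rw [h2, hye_j₀, hyj₀]
          · rw [hye_other e j h1 h2]
            have hxj : x j ≠ 0 := fun h0 => h1 ((hx j).mp h0)
            have heval : (e ⟨j, h1, h2⟩ : F) = y j * (x j)⁻¹ := rfl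
            rw [heval, mul_comm (y j), ← mul_assoc, mul_inv_cancel₀ hxj, one_mul]
      refine ⟨e, ?_⟩
      apply Subtype.ext
      simp only [hΦ]
      rw [hyee]
      apply Submodule.eq_of_le_of_finrank_le
      · rw [Submodule.span_le]
        rintro z hz
        rcases hz with rfl | hz
        · exact hxL
        · rw [Set.mem_singleton_iff] at hz; subst hz; exact hyL
      · rw [hL.1, span_pair_finrank x y i₀ hx hyi₀ j₀ hj₀]
  -- counting
  rw [← Nat.card_eq_of_bijective Φ hΦbij]
  have hc1 : Fintype.card {a : F // a ≠ 0} = q - 1 := by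
    rw [Fintype.card_subtype]
    rw [show (Finset.univ.filter (fun a : F => a ≠ 0)) = Finset.univ.erase 0 by
      ext a; simp [Finset.mem_erase]]
    rw [Finset.card_erase_of_mem (Finset.mem_univ _), Finset.card_univ, hF]
  have hc2 : Fintype.card {j : Fin (q+1) // j ≠ i₀ ∧ j ≠ j₀} = q - 1 := by
    rw [Fintype.card_subtype]
    rw [show (Finset.univ.filter (fun j : Fin (q+1) => j ≠ i₀ ∧ j ≠ j₀)) =
        Finset.univ \ {i₀, j₀} by
      ext j; simp [Finset.mem_sdiff]]
    rw [Finset.card_sdiff_of_subset (Finset.subset_univ _), Finset.card_univ, Fintype.card_fin]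
    rw [Finset.card_insert_of_notMem (by simpa using (Ne.symm hj₀))]
    simp
  rw [Nat.card_eq_fintype_card]
  show Fintype.card ({j : Fin (q+1) // j ≠ i₀ ∧ j ≠ j₀} ↪ {a : F // a ≠ 0}) = _
  rw [Fintype.card_embedding_eq, hc1, hc2, Nat.descFactorial_self]
end

section
/- Let q ≥ 2 and V = F_q^{q+1}. In the graph whose vertices are the simplex lines of V, with two simplex lines adjacent when their intersection is 1-dimensional, every vertex has degree exactly (q+1)·((q-1)! − 1). -/
open Finset Module Submodule

set_option linter.unusedSectionVars false

section SP
variable {F : Type*} [Field F] [DecidableEq F] {n : ℕ}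

lemma simplexVec_iff (x : Fin n → F) :
    SimplexVec x ↔ ∃ i0, x i0 = 0 ∧ ∀ i, i ≠ i0 → x i ≠ 0 := by
  unfold SimplexVec
  rw [Finset.card_eq_one]
  constructor
  · rintro ⟨a, ha⟩
    refine ⟨a, ?_, ?_⟩
    · have : a ∈ Finset.univ.filter (fun i => x i = 0) := ha ▸ Finset.mem_singleton_self a
      simpa using this
    · intro i hi hxi
      have : i ∈ Finset.univ.filter (fun i => x i = 0) := by simpa using hxi
      rw [ha, Finset.mem_singleton] at this
      exact hi this
  · rintro ⟨i0, h0, h⟩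
    refine ⟨i0, ?_⟩
    ext i
    simp only [Finset.mem_filter, Finset.mem_univ, true_and, Finset.mem_singleton]
    constructor
    · intro hxi; by_contra hne; exact h i hne hxi
    · rintro rfl; exact h0

lemma simplexVec_smul {x : Fin n → F} {c : F} (hc : c ≠ 0) (hx : SimplexVec x) :
    SimplexVec (c • x) := by
  rw [simplexVec_iff] at hx ⊢
  obtain ⟨i0, h0, h⟩ := hx
  exact ⟨i0, by simp [h0], fun i hi => by simp [hc, h i hi]⟩
lemma two_zeros {L : Submodule F (Fin n → F)} (hL : SimplexLine L)
    {x : Fin n → F} (hx : x ∈ L) {i j : Fin n} (hij : i ≠ j)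
    (hi : x i = 0) (hj : x j = 0) : x = 0 := by
  by_contra hx0
  obtain ⟨i0, h0, h⟩ := (simplexVec_iff x).mp (hL.2 x hx hx0)
  rcases eq_or_ne i i0 with rfl | hii0
  · exact h j (fun hji => hij hji.symm) hj
  · exact h i hii0 hi

lemma mem_span_of_two_zero {L : Submodule F (Fin n → F)} (hL : SimplexLine L)
    {x y : Fin n → F} (hx : x ∈ L) (hy : y ∈ L)
    (hx0 : x ≠ 0) {i : Fin n} (hxi : x i = 0) (hyi : y i = 0) :
    y ∈ Submodule.span F {x} := by
  obtain ⟨i0, h0, h⟩ := (simplexVec_iff x).mp (hL.2 x hx hx0)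
  -- the unique zero of x is i
  have hi0 : i0 = i := by
    by_contra hne
    exact h i (fun hh => hne hh.symm) hxi
  subst hi0
  -- pick j ≠ i0
  have : Nontrivial (Fin n) := by
    rcases Nat.lt_or_ge n 2 with h2 | h2
    · exfalso
      apply hx0
      funext k
      have hk : k = i0 := by
        have := k.isLt; have := i0.isLt
        exact Fin.ext (by omega)
      rw [hk]; exact h0
    · exact Fin.nontrivial_iff_two_le.mpr h2
  obtain ⟨j, hj⟩ := exists_ne i0
  have hxj : x j ≠ 0 := h j hj
  set c := y j / x j with hc
  have hz : y - c • x ∈ L := Submodule.sub_mem L hy (Submodule.smul_mem L c hx)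
  have hzi : (y - c • x) i0 = 0 := by simp [hyi, hxi]
  have hzj : (y - c • x) j = 0 := by
    simp only [Pi.sub_apply, Pi.smul_apply, smul_eq_mul, hc]
    field_simp
    ring
  have hz0 : y - c • x = 0 := two_zeros hL hz hj hzj hzi
  exact Submodule.mem_span_singleton.mpr ⟨c, (sub_eq_zero.mp hz0).symm⟩

end SP

section Main
variable {F : Type*} [Field F] [Fintype F] [DecidableEq F] {q : ℕ}

lemma span_pair_finrank_s10 {n : ℕ} {u v : Fin n → F} {i0 : Fin n}
    (hu0 : u i0 = 0) (hune : u ≠ 0) (hv0 : v i0 = 1) :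
    Module.finrank F ↥(Submodule.span F ({u, v} : Set (Fin n → F))) = 2 := by
  have huv : u ≠ v := fun h => by
    rw [h, hv0] at hu0; rw [hu0] at hv0; exact one_ne_zero (α := F) hu0
  have hli : LinearIndependent F ((↑) : ({u, v} : Set (Fin n → F)) → (Fin n → F)) := by
    apply linearIndepOn_id_pair hune
    intro a ha
    have := congrFun ha i0
    simp [hu0, hv0] at this
  classical
  rw [finrank_span_set_eq_card hli]
  simp [Set.toFinset_insert, Set.toFinset_singleton, Finset.card_insert_of_notMem, huv]

lemma key (hq : 2 ≤ q) (hF : Fintype.card F = q)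
    {u : Fin (q+1) → F} {i0 : Fin (q+1)} (hu0 : u i0 = 0)
    (hu : ∀ i, i ≠ i0 → u i ≠ 0)
    {v : Fin (q+1) → F} (hv0 : v i0 = 1) :
    SimplexLine (Submodule.span F {u, v}) ↔
      Function.Injective (fun i : {i : Fin (q+1) // i ≠ i0} => v i.1 / u i.1) := by
  have hune : u ≠ 0 := by
    have : Nontrivial (Fin (q+1)) := Fin.nontrivial_iff_two_le.mpr (by omega)
    obtain ⟨j, hj⟩ := exists_ne i0
    exact fun h => hu j hj (by rw [h]; rfl)
  constructor
  · rintro ⟨hdim, hall⟩ ⟨i, hi⟩ ⟨j, hj⟩ hij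
    simp only at hij
    by_contra hne
    have hne' : i ≠ j := fun h => hne (Subtype.ext h)
    set c := v i / u i with hc
    have hw : v - c • u ∈ Submodule.span F ({u, v} : Set (Fin (q+1) → F)) := by
      apply Submodule.sub_mem
      · exact Submodule.subset_span (by simp)
      · exact Submodule.smul_mem _ _ (Submodule.subset_span (by simp))
    have hw0 : v - c • u ≠ 0 := by
      intro h
      have := congrFun h i0
      simp [hv0, hu0] at this
    have hui := hu i hi
    have huj := hu j hj
    have hwi : (v - c • u) i = 0 := by
      simp only [Pi.sub_apply, Pi.smul_apply, smul_eq_mul, hc]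
      field_simp
      ring
    have hwj : (v - c • u) j = 0 := by
      simp only [Pi.sub_apply, Pi.smul_apply, smul_eq_mul, hij]
      field_simp
      ring
    obtain ⟨k, hk0, hk⟩ := (simplexVec_iff _).mp (hall _ hw hw0)
    rcases eq_or_ne i k with rfl | hik
    · exact hk j (fun h => hne' h.symm) hwj
    · exact hk i hik hwi
  · intro hinj
    refine ⟨span_pair_finrank_s10 hu0 hune hv0, ?_⟩
    -- injective → bijective since card {i // i ≠ i0} = q = card F
    have hcard : Fintype.card {i : Fin (q+1) // i ≠ i0} = q := by
      simp [Fintype.card_subtype_compl]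
    have hbij : Function.Bijective (fun i : {i : Fin (q+1) // i ≠ i0} => v i.1 / u i.1) := by
      rw [Fintype.bijective_iff_injective_and_card, hcard, hF]
      exact ⟨hinj, rfl⟩
    intro x hx hx0
    rw [Submodule.mem_span_pair] at hx
    obtain ⟨a, b, hab⟩ := hx
    rcases eq_or_ne b 0 with rfl | hb
    · have ha : a ≠ 0 := by
        rintro rfl; apply hx0; rw [← hab]; simp
      have : x = a • u := by rw [← hab]; simp
      rw [this]
      exact simplexVec_smul ha ((simplexVec_iff u).mpr ⟨i0, hu0, hu⟩)
    · -- x = a u + b v, b ≠ 0; zero coords: i ≠ i0 with v i / u i = -a/b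
      obtain ⟨⟨k, hk⟩, hkval0⟩ := hbij.2 (-a/b)
      have hkval : v k / u k = -a / b := hkval0
      rw [simplexVec_iff]
      refine ⟨k, ?_, ?_⟩
      · rw [← hab]
        simp only [Pi.add_apply, Pi.smul_apply, smul_eq_mul]
        have huk := hu k hk
        field_simp at hkval
        linear_combination hkval
      · intro i hik
        rw [← hab]
        simp only [Pi.add_apply, Pi.smul_apply, smul_eq_mul]
        rcases eq_or_ne i i0 with rfl | hii0
        · rw [hu0, hv0]; simpa using hb
        · intro hzero
          apply hik
          have hui := hu i hii0
          have : v i / u i = -a / b := by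
            field_simp
            linear_combination hzero
          have h2 := hbij.1 (a₁ := ⟨i, hii0⟩) (a₂ := ⟨k, hk⟩)
            (by show v i / u i = v k / u k; rw [this, hkval])
          exact congrArg Subtype.val h2

lemma exists_zero_coord {n : ℕ} {L : Submodule F (Fin n → F)} (hL : SimplexLine L)
    (i : Fin n) : ∃ x, x ∈ L ∧ x ≠ 0 ∧ x i = 0 := by
  by_contra h
  push_neg at h
  have hinj : Function.Injective
      ((LinearMap.proj i : (Fin n → F) →ₗ[F] F).comp L.subtype) := by
    rw [← LinearMap.ker_eq_bot, Submodule.eq_bot_iff]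
    rintro ⟨x, hx⟩ hker
    have hxi : x i = 0 := hker
    have : x = 0 := by
      by_contra hx0
      exact (h x hx hx0) hxi
    exact Subtype.ext this
  have hle := LinearMap.finrank_le_finrank_of_injective hinj
  rw [hL.1, Module.finrank_self] at hle
  omega

lemma card_lines_through (hq : 2 ≤ q) (hF : Fintype.card F = q)
    {u : Fin (q+1) → F} {i0 : Fin (q+1)} (hu0 : u i0 = 0)
    (hu : ∀ i, i ≠ i0 → u i ≠ 0) :
    Nat.card {L' : Submodule F (Fin (q+1) → F) // SimplexLine L' ∧ u ∈ L'} =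
      Nat.factorial (q - 1) := by
  classical
  have hnt : Nontrivial (Fin (q+1)) := Fin.nontrivial_iff_two_le.mpr (by omega)
  obtain ⟨i1, hi1⟩ := exists_ne i0
  have hune : u ≠ 0 := fun h => hu i1 hi1 (by rw [h]; rfl)
  -- step 1: lines through u ≃ normalized second generators
  have e1 : Nat.card {v : Fin (q+1) → F // v i0 = 1 ∧ v i1 = 0 ∧
      Function.Injective (fun i : {i : Fin (q+1) // i ≠ i0} => v i.1 / u i.1)} =
      Nat.card {L' : Submodule F (Fin (q+1) → F) // SimplexLine L' ∧ u ∈ L'} := by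
    apply Nat.card_eq_of_bijective
      (f := fun v => ⟨Submodule.span F {u, v.1},
        (key hq hF hu0 hu v.2.1).mpr v.2.2.2,
        Submodule.subset_span (by simp)⟩)
    constructor
    · rintro ⟨v, hv01, hv11, hvinj⟩ ⟨w, hw01, hw11, hwinj⟩ hvw
      have hsp : Submodule.span F {u, v} = Submodule.span F {u, w} :=
        congrArg Subtype.val hvw
      have hwmem : w ∈ Submodule.span F ({u, v} : Set (Fin (q+1) → F)) := by
        rw [hsp]; exact Submodule.subset_span (by simp)
      rw [Submodule.mem_span_pair] at hwmem
      obtain ⟨a, b, hab⟩ := hwmem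
      have hb : b = 1 := by
        have := congrFun hab i0
        simpa [hu0, hv01, hw01] using this
      have ha : a = 0 := by
        have := congrFun hab i1
        rw [hb] at this
        simp only [Pi.add_apply, Pi.smul_apply, smul_eq_mul, one_mul, hv11, hw11,
          add_zero] at this
        exact (mul_eq_zero.mp this).resolve_right (hu i1 hi1)
      apply Subtype.ext
      funext j
      have := congrFun hab j
      simpa [ha, hb] using this
    · rintro ⟨L', hL', huL'⟩
      -- find w ∈ L' outside span{u}
      have hspanle : Submodule.span F {u} ≤ L' := by
        rw [Submodule.span_le, Set.singleton_subset_iff]; exact huL'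
      have hlt : Submodule.span F {u} < L' := by
        rcases hspanle.lt_or_eq with h | h
        · exact h
        · exfalso
          have h1 : Module.finrank F ↥(Submodule.span F ({u} : Set (Fin (q+1) → F))) = 1 :=
            finrank_span_singleton hune
          rw [h, hL'.1] at h1
          omega
      obtain ⟨w, hwL', hwns⟩ := SetLike.exists_of_lt hlt
      have hwi0 : w i0 ≠ 0 := by
        intro hwi0
        exact hwns (mem_span_of_two_zero hL' huL' hwL' hune hu0 hwi0)
      set w' : Fin (q+1) → F := (w i0)⁻¹ • w with hw'
      have hw'L' : w' ∈ L' := Submodule.smul_mem _ _ hwL'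
      have hw'i0 : w' i0 = 1 := by
        simp [hw', inv_mul_cancel₀ hwi0]
      set v : Fin (q+1) → F := w' - (w' i1 / u i1) • u with hv
      have hvL' : v ∈ L' := Submodule.sub_mem _ hw'L' (Submodule.smul_mem _ _ huL')
      have hv01 : v i0 = 1 := by simp [hv, hu0, hw'i0]
      have hv11 : v i1 = 0 := by
        have hui1 := hu i1 hi1
        simp only [hv, Pi.sub_apply, Pi.smul_apply, smul_eq_mul]
        field_simp
        ring
      have hsp : Submodule.span F ({u, v} : Set (Fin (q+1) → F)) = L' := by
        apply Submodule.eq_of_le_of_finrank_le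
        · rw [Submodule.span_le, Set.insert_subset_iff, Set.singleton_subset_iff]
          exact ⟨huL', hvL'⟩
        · rw [hL'.1, span_pair_finrank_s10 hu0 hune hv01]
      have hinj := (key hq hF hu0 hu hv01).mp (by rw [hsp]; exact hL')
      exact ⟨⟨v, hv01, hv11, hinj⟩, Subtype.ext hsp⟩
  rw [← e1]
  -- step 2: normalized generators ≃ injections with a prescribed zero
  set a1 : {i : Fin (q+1) // i ≠ i0} := ⟨i1, hi1⟩ with ha1
  have e2 : Nat.card {v : Fin (q+1) → F // v i0 = 1 ∧ v i1 = 0 ∧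
      Function.Injective (fun i : {i : Fin (q+1) // i ≠ i0} => v i.1 / u i.1)} =
      Nat.card {f : {i : Fin (q+1) // i ≠ i0} → F // Function.Injective f ∧ f a1 = 0} := by
    apply Nat.card_eq_of_bijective (f := fun v =>
      ⟨fun i => v.1 i.1 / u i.1, v.2.2.2, by simp [ha1, v.2.2.1]⟩)
    constructor
    · rintro ⟨v, hv0, hv1, hvinj⟩ ⟨w, hw0, hw1, hwinj⟩ h
      have h' : ∀ i : {i : Fin (q+1) // i ≠ i0}, v i.1 / u i.1 = w i.1 / u i.1 :=
        fun i => congrFun (congrArg Subtype.val h) i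
      apply Subtype.ext
      funext j
      show v j = w j
      rcases eq_or_ne j i0 with rfl | hj
      · rw [hv0, hw0]
      · have := h' ⟨j, hj⟩
        have huj := hu j hj
        field_simp at this
        exact this
    · rintro ⟨f, hfinj, hf0⟩
      refine ⟨⟨fun i => if h : i = i0 then 1 else f ⟨i, h⟩ * u i, by simp, ?_, ?_⟩, ?_⟩
      · simp only [dif_neg hi1]
        rw [show f ⟨i1, hi1⟩ = 0 from hf0]
        ring
      · intro i j hij
        simp only [dif_neg i.2, dif_neg j.2] at hij
        rw [mul_div_assoc, mul_div_assoc, div_self (hu _ i.2), div_self (hu _ j.2),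
          mul_one, mul_one] at hij
        exact hfinj hij
      · apply Subtype.ext
        funext i
        simp only [dif_neg i.2]
        rw [mul_div_assoc, div_self (hu _ i.2), mul_one]
  rw [e2]
  -- step 3: count injections with a prescribed zero
  have e3 : Nat.card {f : {i : Fin (q+1) // i ≠ i0} → F // Function.Injective f ∧ f a1 = 0} =
      Nat.card ({i : {i : Fin (q+1) // i ≠ i0} // i ≠ a1} ↪ {c : F // c ≠ 0}) := by
    apply Nat.card_eq_of_bijective (f := fun f =>
      ⟨fun x => ⟨f.1 x.1, fun h0 => x.2 (f.2.1 (h0.trans f.2.2.symm))⟩,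
       fun x y hxy => Subtype.ext (f.2.1 (congrArg Subtype.val hxy))⟩)
    constructor
    · rintro ⟨f, hf⟩ ⟨g, hg⟩ h
      apply Subtype.ext
      funext i
      show f i = g i
      rcases eq_or_ne i a1 with rfl | hi
      · rw [hf.2, hg.2]
      · exact congrArg Subtype.val (DFunLike.congr_fun h ⟨i, hi⟩)
    · rintro ⟨g, hg⟩
      refine ⟨⟨fun i => if h : i = a1 then 0 else (g ⟨i, h⟩).1, ?_, by simp⟩, ?_⟩
      · intro i j hij
        dsimp only at hij
        rcases eq_or_ne i a1 with rfl | hi <;> rcases eq_or_ne j a1 with rfl | hj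
        · rfl
        · rw [dif_pos rfl, dif_neg hj] at hij
          exact absurd hij.symm (g ⟨j, hj⟩).2
        · rw [dif_pos rfl, dif_neg hi] at hij
          exact absurd hij (g ⟨i, hi⟩).2
        · rw [dif_neg hi, dif_neg hj] at hij
          have := hg (Subtype.ext hij)
          exact congrArg Subtype.val this
      · apply DFunLike.ext
        intro x
        apply Subtype.ext
        show (if h : x.1 = a1 then 0 else (g ⟨x.1, h⟩).1) = (g x).1
        rw [dif_neg x.2]
  rw [e3]
  -- step 4: cardinal arithmetic
  have hc1 : Fintype.card {i : {i : Fin (q+1) // i ≠ i0} // i ≠ a1} = q - 1 := by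
    rw [Fintype.card_subtype_compl, Fintype.card_subtype_compl]
    simp [Fintype.card_subtype_eq]
  have hc2 : Fintype.card {c : F // c ≠ 0} = q - 1 := by
    rw [Fintype.card_subtype_compl, Fintype.card_subtype_eq, hF]
  rw [Nat.card_eq_fintype_card, Fintype.card_embedding_eq, hc1, hc2,
    Nat.descFactorial_self]
end Main

instance {F : Type*} [Field F] [Fintype F] {n : ℕ} : Finite (Submodule F (Fin n → F)) :=
  Finite.of_injective (fun p => (p : Set (Fin n → F))) SetLike.coe_injective

lemma card_subtype_ne {A : Type*} [Finite A] [DecidableEq A] (a : A) :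
    Nat.card {x : A // x ≠ a} = Nat.card A - 1 := by
  have := Fintype.ofFinite A
  simp [Nat.card_eq_fintype_card, Fintype.card_subtype_compl, Fintype.card_subtype_eq]


/-- In the graph of simplex lines of `F_q^(q+1)` (adjacency: 1-dimensional
intersection), every vertex has degree `(q+1)·((q-1)! - 1)`. -/
theorem simplex_line_graph_degree
    (F : Type*) [Field F] [Fintype F] [DecidableEq F] (q : ℕ) (hq : 2 ≤ q)
    (hF : Fintype.card F = q)
    (L : Submodule F (Fin (q + 1) → F)) (hL : SimplexLine L) :
    Nat.card {L' : Submodule F (Fin (q + 1) → F) //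
        SimplexLine L' ∧ L' ≠ L ∧ Module.finrank F ↥(L ⊓ L') = 1} =
      (q + 1) * (Nat.factorial (q - 1) - 1) := by
  classical
  choose U hUL hUne hUz using exists_zero_coord hL
  have hUnz : ∀ i j, j ≠ i → U i j ≠ 0 := by
    intro i j hj
    obtain ⟨k, hk0, hk⟩ := (simplexVec_iff _).mp (hL.2 _ (hUL i) (hUne i))
    have hki : k = i := by
      by_contra h
      exact hk i (fun e => h e.symm) (hUz i)
    subst hki
    exact hk j hj
  -- each simplex vector of L determines its zero coordinate
  have Uinj : ∀ i j : Fin (q+1),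
      Submodule.span F {U i} = Submodule.span F {U j} → i = j := by
    intro i j hij
    have : U i ∈ Submodule.span F {U j} := hij ▸ Submodule.mem_span_singleton_self _
    obtain ⟨c, hc⟩ := Submodule.mem_span_singleton.mp this
    by_contra hne
    have h1 : U i j ≠ 0 := hUnz i j (fun e => hne e.symm)
    apply h1
    rw [← hc]
    simp [hUz j]
  -- main structural claim
  have claim : ∀ L' : Submodule F (Fin (q+1) → F), SimplexLine L' → L' ≠ L →
      Module.finrank F ↥(L ⊓ L') = 1 → ∃ i, L ⊓ L' = Submodule.span F {U i} := by
    intro L' hL' hne hrk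
    have hbot : L ⊓ L' ≠ ⊥ := by
      intro h; rw [h] at hrk; simp [finrank_bot] at hrk
    obtain ⟨x, hx, hx0⟩ := Submodule.exists_mem_ne_zero_of_ne_bot hbot
    obtain ⟨i, hi0, hi⟩ := (simplexVec_iff x).mp (hL.2 x hx.1 hx0)
    refine ⟨i, ?_⟩
    have h1 : Submodule.span F {x} ≤ L ⊓ L' := by
      rw [Submodule.span_le, Set.singleton_subset_iff]; exact hx
    have h2 : Submodule.span F ({x} : Set (Fin (q+1) → F)) = L ⊓ L' := by
      apply Submodule.eq_of_le_of_finrank_le h1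
      rw [hrk, finrank_span_singleton hx0]
    rw [← h2]
    apply le_antisymm
    · rw [Submodule.span_le, Set.singleton_subset_iff]
      exact mem_span_of_two_zero hL (hUL i) hx.1 (hUne i) (hUz i) hi0
    · rw [Submodule.span_le, Set.singleton_subset_iff]
      exact mem_span_of_two_zero hL hx.1 (hUL i) hx0 hi0 (hUz i)
  -- fibration by the zero coordinate of the intersection
  set S := {L' : Submodule F (Fin (q + 1) → F) //
      SimplexLine L' ∧ L' ≠ L ∧ Module.finrank F ↥(L ⊓ L') = 1} with hS
  have hgex : ∀ s : S, ∃ i, L ⊓ s.1 = Submodule.span F {U i} :=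
    fun s => claim s.1 s.2.1 s.2.2.1 s.2.2.2
  choose g hg using hgex
  have hgiff : ∀ (s : S) (i : Fin (q+1)),
      g s = i ↔ L ⊓ s.1 = Submodule.span F {U i} := by
    intro s i
    constructor
    · rintro rfl; exact hg s
    · intro h
      exact Uinj _ _ ((hg s).symm.trans h)
  -- the equivalence between conditions
  have hcond : ∀ (L' : Submodule F (Fin (q+1) → F)) (i : Fin (q+1)),
      (SimplexLine L' ∧ L' ≠ L ∧ Module.finrank F ↥(L ⊓ L') = 1 ∧
        L ⊓ L' = Submodule.span F {U i}) ↔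
      ((SimplexLine L' ∧ U i ∈ L') ∧ L' ≠ L) := by
    intro L' i
    constructor
    · rintro ⟨h1, h2, h3, h4⟩
      refine ⟨⟨h1, ?_⟩, h2⟩
      have : U i ∈ L ⊓ L' := h4 ▸ Submodule.mem_span_singleton_self _
      exact this.2
    · rintro ⟨⟨h1, h2⟩, h3⟩
      have hle : Submodule.span F {U i} ≤ L ⊓ L' := by
        rw [Submodule.span_le, Set.singleton_subset_iff]
        exact ⟨hUL i, h2⟩
      have hnotL : L ⊓ L' ≠ L := by
        intro h
        apply h3
        have hLle : L ≤ L' := by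
          rw [← h]; exact inf_le_right
        exact (Submodule.eq_of_le_of_finrank_le hLle (by rw [hL.1, h1.1])).symm
      have hrk1 : Module.finrank F ↥(L ⊓ L') = 1 := by
        have hge : 1 ≤ Module.finrank F ↥(L ⊓ L') := by
          calc 1 = Module.finrank F ↥(Submodule.span F ({U i} : Set (Fin (q+1) → F))) :=
                (finrank_span_singleton (hUne i)).symm
            _ ≤ _ := Submodule.finrank_mono hle
        have hle2 : Module.finrank F ↥(L ⊓ L') ≤ 2 := by
          rw [← hL.1]; exact Submodule.finrank_mono inf_le_left
        rcases Nat.lt_or_ge (Module.finrank F ↥(L ⊓ L')) 2 with h | h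
        · omega
        · exact absurd (Submodule.eq_of_le_of_finrank_le inf_le_left
            (by rw [hL.1]; exact h)) hnotL
      refine ⟨h1, h3, hrk1, ?_⟩
      exact (Submodule.eq_of_le_of_finrank_le hle (by rw [hrk1, finrank_span_singleton (hUne i)])).symm
  -- count
  have step1 : Nat.card S = ∑ i : Fin (q+1), Nat.card {s : S // g s = i} := by
    have := Fintype.ofFinite S
    letI : ∀ i, Fintype {s : S // g s = i} := fun i => Fintype.ofFinite _
    rw [Nat.card_congr (Equiv.sigmaFiberEquiv g).symm, Nat.card_eq_fintype_card,
      Fintype.card_sigma]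
    exact Finset.sum_congr rfl fun i _ => (Nat.card_eq_fintype_card).symm
  have step2 : ∀ i : Fin (q+1), Nat.card {s : S // g s = i} =
      Nat.factorial (q - 1) - 1 := by
    intro i
    have e1 : {s : S // g s = i} ≃
        {L' : Submodule F (Fin (q+1) → F) // (SimplexLine L' ∧ U i ∈ L') ∧ L' ≠ L} := by
      refine ⟨fun s => ⟨s.1.1, ((hcond s.1.1 i).mp
          ⟨s.1.2.1, s.1.2.2.1, s.1.2.2.2, (hgiff s.1 i).mp s.2⟩)⟩,
        fun x => ⟨⟨x.1, ?_⟩, ?_⟩, fun s => by ext; rfl, fun x => by ext; rfl⟩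
      · have h := (hcond x.1 i).mpr x.2
        exact ⟨h.1, h.2.1, h.2.2.1⟩
      · have h := (hcond x.1 i).mpr x.2
        exact (hgiff _ i).mpr h.2.2.2
    have e2 : {L' : Submodule F (Fin (q+1) → F) // (SimplexLine L' ∧ U i ∈ L') ∧ L' ≠ L} ≃
        {x : {L' : Submodule F (Fin (q+1) → F) // SimplexLine L' ∧ U i ∈ L'} //
          x ≠ ⟨L, hL, hUL i⟩} := by
      refine ⟨fun y => ⟨⟨y.1, y.2.1⟩, fun h => y.2.2 (congrArg Subtype.val h)⟩,
        fun x => ⟨x.1.1, x.1.2, fun h => x.2 (Subtype.ext h)⟩,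
        fun y => by ext; rfl, fun x => by ext; rfl⟩
    rw [Nat.card_congr (e1.trans e2), card_subtype_ne,
      card_lines_through hq hF (hUz i) (fun j hj => hUnz i j hj)]
  rw [step1]
  rw [Finset.sum_congr rfl fun i _ => step2 i]
  simp [Finset.sum_const, mul_comm]
end
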